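/- Let P(z1,...,zn) be a multi-affine complex polynomial and Γ1,...,Γn ⊆ ℂ non-empty open connected regions with Γ1 unbounded, such that P is nonzero whenever each zℓ ∈ Γℓ. Then the partial derivative P3(z2,...,zn) = ∂P/∂z1 (which is independent of z1 by multi-affineness) is either nonzero whenever zℓ ∈ Γℓ for ℓ ≥ 2, or identically zero. -/

import Mathlib

open MvPolynomial

section Aux

open Polynomial in
/-- Evaluating a univariate specialization. -/
lemma aux_eval_aeval {n : ℕ} (p : MvPolynomial (Fin (n+1)) ℂ)
    (G : Fin (n+1) → Polynomial ℂ) (t : ℂ) :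
    Polynomial.eval t (MvPolynomial.aeval G p)
      = MvPolynomial.eval (fun i => Polynomial.eval t (G i)) p := by
  induction p using MvPolynomial.induction_on with
  | C a => simp
  | add p q hp hq => simp [hp, hq]
  | mul_X p i hp => simp [hp]

open Polynomial in
/-- The specialization intertwines `pderiv 0` with `derivative`. -/
lemma aux_deriv_aeval {n : ℕ} (p : MvPolynomial (Fin (n+1)) ℂ)
    (G : Fin (n+1) → Polynomial ℂ)
    (hG : ∀ i, Polynomial.derivative (G i) = if i = 0 then 1 else 0) :
    Polynomial.derivative (MvPolynomial.aeval G p)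
      = MvPolynomial.aeval G (MvPolynomial.pderiv 0 p) := by
  induction p using MvPolynomial.induction_on with
  | C a => simp
  | add p q hp hq => simp [hp, hq]
  | mul_X p i hp =>
    rw [map_mul, Polynomial.derivative_mul, MvPolynomial.pderiv_mul, map_add,
      hp, MvPolynomial.pderiv_X]
    simp only [MvPolynomial.aeval_X, hG i]
    by_cases h : i = 0 <;> simp [h, Pi.single_apply, mul_comm]

open Polynomial in
lemma aux_natDegree {n : ℕ} (p : MvPolynomial (Fin (n+1)) ℂ)
    (hma : p.degreeOf 0 ≤ 1) (y : Fin (n+1) → ℂ) :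
    (MvPolynomial.aeval
      (fun i => if i = 0 then Polynomial.X else Polynomial.C (y i)) p).natDegree ≤ 1 := by
  set G : Fin (n+1) → Polynomial ℂ :=
    fun i => if i = 0 then Polynomial.X else Polynomial.C (y i) with hGdef
  rw [MvPolynomial.aeval_def, MvPolynomial.eval₂_eq]
  refine Polynomial.natDegree_sum_le_of_forall_le _ _ ?_
  intro d hd
  calc (algebraMap ℂ (Polynomial ℂ) (MvPolynomial.coeff d p) * ∏ i ∈ d.support, G i ^ d i).natDegree
      ≤ (∏ i ∈ d.support, G i ^ d i).natDegree := by
        simpa using Polynomial.natDegree_C_mul_le _ _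
    _ ≤ ∑ i ∈ d.support, (G i ^ d i).natDegree := Polynomial.natDegree_prod_le _ _
    _ ≤ ∑ i ∈ d.support, (if i = 0 then d i else 0) := by
        refine Finset.sum_le_sum fun i _ => ?_
        by_cases h : i = 0
        · simp [hGdef, h, Polynomial.natDegree_X_pow]
        · simp [hGdef, h]
    _ ≤ d 0 := by
        rw [Finset.sum_ite_eq' d.support 0 (fun i => d i)]
        split <;> simp
    _ ≤ 1 := by
        have := MvPolynomial.degreeOf_eq_sup (0 : Fin (n+1)) p
        have hle : d 0 ≤ p.degreeOf 0 := by
          rw [this]; exact Finset.le_sup (f := fun m => m 0) hd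
        exact hle.trans hma

/-- Key affine decomposition. -/
lemma aux_key {n : ℕ} (P : MvPolynomial (Fin (n+1)) ℂ) (hma : P.degreeOf 0 ≤ 1)
    (y : Fin (n+1) → ℂ) (t : ℂ) :
    MvPolynomial.eval (Function.update y 0 t) P
      = MvPolynomial.eval y (MvPolynomial.pderiv 0 P) * t
        + MvPolynomial.eval (Function.update y 0 0) P ∧
    MvPolynomial.eval (Function.update y 0 t) (MvPolynomial.pderiv 0 P)
      = MvPolynomial.eval y (MvPolynomial.pderiv 0 P) := by
  set G : Fin (n+1) → Polynomial ℂ :=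
    fun i => if i = 0 then Polynomial.X else Polynomial.C (y i) with hGdef
  have hGev : ∀ s : ℂ, (fun i => Polynomial.eval s (G i)) = Function.update y 0 s := by
    intro s; funext i
    by_cases h : i = 0
    · subst h; simp [hGdef]
    · simp [hGdef, h, Function.update_of_ne h]
  have hGd : ∀ i, Polynomial.derivative (G i) = if i = 0 then 1 else 0 := by
    intro i; by_cases h : i = 0 <;> simp [hGdef, h]
  have hdeg : (MvPolynomial.aeval G P).natDegree ≤ 1 := aux_natDegree P hma y
  set p1 : Polynomial ℂ := MvPolynomial.aeval G P with hp1
  have hform := Polynomial.eq_X_add_C_of_natDegree_le_one hdeg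
  have hevP : ∀ s : ℂ, MvPolynomial.eval (Function.update y 0 s) P
      = p1.coeff 1 * s + p1.coeff 0 := by
    intro s
    rw [← hGev s, ← aux_eval_aeval P G s, ← hp1]
    conv_lhs => rw [hform]
    simp
  have hevQ : ∀ s : ℂ, MvPolynomial.eval (Function.update y 0 s)
      (MvPolynomial.pderiv 0 P) = p1.coeff 1 := by
    intro s
    rw [← hGev s, ← aux_eval_aeval _ G s, ← aux_deriv_aeval P G hGd, ← hp1]
    conv_lhs => rw [hform]
    simp
  have hyQ : MvPolynomial.eval y (MvPolynomial.pderiv 0 P) = p1.coeff 1 := by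
    have := hevQ (y 0)
    rwa [Function.update_eq_self] at this
  constructor
  · rw [hevP t, hyQ, hevP 0]; ring
  · rw [hevQ t, hyQ]

end Aux

/-- Differentiation preserves stability for multi-affine polynomials when the
region of the differentiated variable is unbounded. -/
theorem stmt2 (n : ℕ) (P : MvPolynomial (Fin (n+1)) ℂ)
    (hma : ∀ i, P.degreeOf i ≤ 1)
    (Γ : Fin (n+1) → Set ℂ)
    (hne : ∀ i, (Γ i).Nonempty) (hopen : ∀ i, IsOpen (Γ i))
    (hconn : ∀ i, IsConnected (Γ i))
    (hub : ¬ Bornology.IsBounded (Γ 0))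
    (hstab : ∀ z : Fin (n+1) → ℂ, (∀ i, z i ∈ Γ i) → eval z P ≠ 0) :
    (∀ z : Fin (n+1) → ℂ, (∀ i, i ≠ 0 → z i ∈ Γ i) →
        eval z (pderiv 0 P) ≠ 0) ∨
    pderiv 0 P = 0 := by
  by_contra hcon
  push_neg at hcon
  obtain ⟨⟨w, hw, hwQ⟩, hQne⟩ := hcon
  set Q : MvPolynomial (Fin (n+1)) ℂ := pderiv 0 P with hQdef
  -- a point where Q is nonzero
  have hu : ∃ u : Fin (n+1) → ℂ, eval u Q ≠ 0 := by
    by_contra h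
    push_neg at h
    exact hQne (MvPolynomial.funext (fun x => by simp [h x]))
  obtain ⟨u, huQ⟩ := hu
  -- the affine path
  set μ : ℂ → (Fin (n+1) → ℂ) := fun s i => w i + (u i - w i) * s with hμdef
  -- open neighborhood of parameters staying in the region
  have hSopen : IsOpen {s : ℂ | ∀ i, i ≠ 0 → μ s i ∈ Γ i} := by
    have : {s : ℂ | ∀ i, i ≠ 0 → μ s i ∈ Γ i}
        = ⋂ i, {s : ℂ | i ≠ 0 → μ s i ∈ Γ i} := by
      ext s; simp [Set.mem_iInter]
    rw [this]
    refine isOpen_iInter_of_finite fun i => ?_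
    by_cases h : i = 0
    · simp [h]
    · have : {s : ℂ | i ≠ 0 → μ s i ∈ Γ i} = (fun s => μ s i) ⁻¹' Γ i := by
        ext s; simp [h]
      rw [this]
      exact (hopen i).preimage (by fun_prop)
  have h0S : (0 : ℂ) ∈ {s : ℂ | ∀ i, i ≠ 0 → μ s i ∈ Γ i} := by
    intro i hi; simpa [hμdef] using hw i hi
  obtain ⟨δ, hδ, hδball⟩ := Metric.isOpen_iff.mp hSopen 0 h0S
  -- univariate polynomials along the path
  set H : Fin (n+1) → Polynomial ℂ :=
    fun i => if i = 0 then 0 else Polynomial.C (w i) + Polynomial.C (u i - w i) * Polynomial.X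
    with hHdef
  have hHev : ∀ s : ℂ, (fun i => Polynomial.eval s (H i)) = Function.update (μ s) 0 0 := by
    intro s; funext i
    by_cases h : i = 0
    · subst h; simp [hHdef]
    · simp [hHdef, h, Function.update_of_ne h, hμdef]
  set qg : Polynomial ℂ := MvPolynomial.aeval H Q with hqg
  set qb : Polynomial ℂ := MvPolynomial.aeval H P with hqb
  have hqgev : ∀ s : ℂ, qg.eval s = eval (μ s) Q := by
    intro s
    rw [hqg, aux_eval_aeval, hHev s]
    exact (aux_key P (hma 0) (μ s) 0).2
  have hqbev : ∀ s : ℂ, qb.eval s = eval (Function.update (μ s) 0 0) P := by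
    intro s; rw [hqb, aux_eval_aeval, hHev s]
  -- stability along the path
  have hstab' : ∀ s ∈ Metric.ball (0:ℂ) δ, ∀ t ∈ Γ 0,
      qg.eval s * t + qb.eval s ≠ 0 := by
    intro s hs t ht
    have hmem : ∀ i, Function.update (μ s) 0 t i ∈ Γ i := by
      intro i
      by_cases h : i = 0
      · subst h; simpa using ht
      · rw [Function.update_of_ne h]
        exact hδball hs i h
    have := hstab _ hmem
    rw [(aux_key P (hma 0) (μ s) t).1] at this
    rwa [hqgev, hqbev]
  -- values at 0 and 1
  have hμ0 : μ 0 = w := by funext i; simp [hμdef]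
  have hqg0 : qg.eval 0 = 0 := by rw [hqgev, hμ0]; exact hwQ
  have hμ1 : μ 1 = u := by
    funext i
    show w i + (u i - w i) * 1 = u i
    ring
  have hqgne : qg ≠ 0 := by
    intro h
    have h1 : qg.eval 1 = eval u Q := by rw [hqgev, hμ1]
    rw [h] at h1
    exact huQ (by simpa using h1.symm)
  -- choose radius
  set T : Finset ℝ := (qg.roots.toFinset.image (fun z : ℂ => ‖z‖)).filter (0 < ·) with hT
  set m : ℝ := (insert (1:ℝ) T).min' (Finset.insert_nonempty _ _) with hm
  have hmpos : 0 < m := by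
    have := Finset.min'_mem (insert (1:ℝ) T) (Finset.insert_nonempty _ _)
    rw [← hm, Finset.mem_insert] at this
    rcases this with h | h
    · rw [h]; norm_num
    · rw [hT] at h
      exact (Finset.mem_filter.mp h).2
  set r : ℝ := min (δ/2) (m/2) with hr
  have hrpos : 0 < r := lt_min (by linarith) (by linarith)
  have hrδ : r < δ := lt_of_le_of_lt (min_le_left _ _) (by linarith)
  have hroot : ∀ s : ℂ, ‖s‖ = r → qg.eval s ≠ 0 := by
    intro s hsr hzero
    have hsroot : s ∈ qg.roots := by
      rw [Polynomial.mem_roots hqgne]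
      exact hzero
    have habs : ‖s‖ ∈ T := by
      rw [hT]
      refine Finset.mem_filter.mpr ⟨Finset.mem_image_of_mem _ (Multiset.mem_toFinset.mpr hsroot), ?_⟩
      rw [hsr]; exact hrpos
    have h1 : m ≤ ‖s‖ :=
      Finset.min'_le _ _ (Finset.mem_insert_of_mem habs)
    have h2 : r ≤ m/2 := min_le_right _ _
    rw [hsr] at h1
    linarith
  -- min of |qg| and max of |qb| on the sphere
  have hKc : IsCompact (Metric.sphere (0:ℂ) r) := isCompact_sphere 0 r
  have hKne : (Metric.sphere (0:ℂ) r).Nonempty :=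
    NormedSpace.sphere_nonempty.mpr hrpos.le
  obtain ⟨s₀, hs₀, hmin'⟩ := hKc.exists_isMinOn hKne
    ((qg.continuous.norm).continuousOn (s := Metric.sphere 0 r))
  obtain ⟨s₁, hs₁, hmax'⟩ := hKc.exists_isMaxOn hKne
    ((qb.continuous.norm).continuousOn (s := Metric.sphere 0 r))
  have hmin : ∀ z ∈ Metric.sphere (0:ℂ) r, ‖qg.eval s₀‖ ≤ ‖qg.eval z‖ :=
    fun z hz => hmin' hz
  have hmax : ∀ z ∈ Metric.sphere (0:ℂ) r, ‖qb.eval z‖ ≤ ‖qb.eval s₁‖ :=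
    fun z hz => hmax' hz
  set mg : ℝ := ‖qg.eval s₀‖ with hmgdef
  set Mb : ℝ := ‖qb.eval s₁‖ with hMbdef
  have hmgpos : 0 < mg := by
    rw [hmgdef]
    refine norm_pos_iff.mpr (hroot s₀ ?_)
    simpa [Complex.dist_eq] using hs₀
  -- qb.eval 0 ≠ 0
  obtain ⟨t0, ht0⟩ := hne 0
  have hqb0 : qb.eval 0 ≠ 0 := by
    have := hstab' 0 (Metric.mem_ball_self hδ) t0 ht0
    rwa [hqg0, zero_mul, zero_add] at this
  -- choose t large
  have hbig : ∃ t ∈ Γ 0, (Mb + ‖qb.eval 0‖)/mg < ‖t‖ := by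
    by_contra h
    push_neg at h
    exact hub (isBounded_iff_forall_norm_le.mpr ⟨(Mb + ‖qb.eval 0‖)/mg, h⟩)
  obtain ⟨t, htΓ, htbig⟩ := hbig
  have htmg : Mb + ‖qb.eval 0‖ < ‖t‖ * mg := by
    rw [div_lt_iff₀ hmgpos] at htbig
    linarith
  have hMbnn : 0 ≤ Mb := norm_nonneg _
  have hqb0pos : 0 < ‖qb.eval 0‖ := norm_pos_iff.mpr hqb0
  -- the function E and its inverse
  set E : ℂ → ℂ := fun s => qg.eval s * t + qb.eval s with hE
  have hEne : ∀ s ∈ Metric.closedBall (0:ℂ) r, E s ≠ 0 := by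
    intro s hs
    exact hstab' s (lt_of_le_of_lt (Metric.mem_closedBall.mp hs) hrδ) t htΓ
  have hEdiff : Differentiable ℂ E := by
    rw [hE]
    exact (qg.differentiable.mul_const t).add qb.differentiable
  set G : ℂ → ℂ := fun s => (E s)⁻¹ with hG
  have hGdiff : DifferentiableOn ℂ G (Metric.closedBall (0:ℂ) r) :=
    (hEdiff.differentiableOn).inv hEne
  have hclos : closure (Metric.ball (0:ℂ) r) = Metric.closedBall 0 r :=
    closure_ball 0 hrpos.ne'
  have hdcc : DiffContOnCl ℂ G (Metric.ball (0:ℂ) r) := by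
    refine DifferentiableOn.diffContOnCl ?_
    rwa [hclos]
  have hfront : ∀ z ∈ frontier (Metric.ball (0:ℂ) r), ‖G z‖ ≤ (‖t‖ * mg - Mb)⁻¹ := by
    intro z hz
    rw [frontier_ball 0 hrpos.ne'] at hz
    have h1 : mg ≤ ‖qg.eval z‖ := hmin z hz
    have h2 : ‖qb.eval z‖ ≤ Mb := hmax z hz
    have h3 : ‖t‖ * mg - Mb ≤ ‖E z‖ := by
      have : ‖qg.eval z * t‖ ≤ ‖E z‖ + ‖qb.eval z‖ := by
        have := norm_add_le (E z) (-(qb.eval z))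
        simpa [hE] using this
      rw [norm_mul] at this
      nlinarith [norm_nonneg t, norm_nonneg (qg.eval z)]
    have hpos : 0 < ‖t‖ * mg - Mb := by linarith
    rw [hG]
    simp only [norm_inv]
    exact inv_anti₀ hpos h3
  have hball : Bornology.IsBounded (Metric.ball (0:ℂ) r) := Metric.isBounded_ball
  have h0mem : (0:ℂ) ∈ closure (Metric.ball (0:ℂ) r) := by
    rw [hclos]
    exact Metric.mem_closedBall_self hrpos.le
  have hfinal := Complex.norm_le_of_forall_mem_frontier_norm_le hball hdcc hfront h0mem
  have hG0 : G 0 = (qb.eval 0)⁻¹ := by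
    rw [hG, hE]
    simp [hqg0]
  rw [hG0, norm_inv] at hfinal
  have hpos : 0 < ‖t‖ * mg - Mb := by linarith
  have : ‖t‖ * mg - Mb ≤ ‖qb.eval 0‖ := by
    have := (inv_le_inv₀ hqb0pos hpos).mp ?_
    · linarith [this]
    · exact hfinal
  linarith
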